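/- Let N ≥ 1 be an integer, λ_1, …, λ_N > 0 reals, φ_n := exp(λ_n), and for j ∈ ℝ let Λ_j := {ν ∈ ℕ^N : ∑_{n=1}^N (2 λ_n ν_n − log(2 ν_n + 1)) ≤ j}. Let X be a real Hilbert space and let (c_ν)_{ν ∈ ℕ^N} be a family in X satisfying the quasi-optimal coefficient bound ‖c_ν‖_X ≤ C · ∏_{n=1}^N φ_n^{−ν_n} √(2ν_n + 1) for some constant C ≥ 0 and all ν. Then for every 0 < μ < 1 there exists j₀ such that for all j ≥ j₀, writing M := #Λ_j, ∑_{ν ∈ ℕ^N \ Λ_j} ‖c_ν‖_X² ≤ C² · C_u(μ) · M · exp( −2 ( M · N! · ∏_{n=1}^N λ_n / (1 + μ) )^{1/N} ), where C_u(μ) := (4e + 4μe − 2) · e/(e − 1). (By Parseval's identity for an orthonormal family (L_ν) this left-hand side equals the squared error ‖u − ∑_{ν∈Λ_j} c_ν L_ν‖² of the truncated quasi-optimal Legendre expansion.) -/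

import Mathlib

set_option maxHeartbeats 2000000

lemma aux_pow_ineq (N : ℕ) {y d : ℝ} (hy : 0 ≤ y) (hd : 0 ≤ d) :
    (N + 1 : ℝ) * d * y ^ N ≤ (y + d) ^ (N + 1) - y ^ (N + 1) := by
  induction N with
  | zero => simp
  | succ n ih =>
    have h1 : (0:ℝ) ≤ y ^ n := pow_nonneg hy n
    have h4 : (y + d) * (y ^ (n+1) + (n + 1 : ℝ) * d * y ^ n) ≤ (y + d) * (y + d) ^ (n + 1) := by
      apply mul_le_mul_of_nonneg_left _ (by linarith)
      linarith [ih]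
    have h6 : (y+d) * (y+d)^(n+1) = (y+d)^(n+2) := by ring
    have h7 : (y + d) * (y ^ (n+1) + (n + 1 : ℝ) * d * y ^ n)
        = y ^ (n+2) + d * y ^ (n+1) + (n+1 : ℝ) * d * (y * y ^ n) + (n+1 : ℝ) * (d * d) * y ^ n := by
      ring
    have h8 : y * y ^ n = y ^ (n+1) := by ring
    have h9 : (0:ℝ) ≤ (n+1 : ℝ) * (d * d) * y ^ n := by positivity
    push_cast
    rw [h8] at h7
    nlinarith [h4, h6, h7, h9]

lemma aux_count : ∀ (N : ℕ) (a : Fin N → ℝ), (∀ n, 0 < a n) → ∀ t : ℝ, 0 ≤ t →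
    ∀ s : Finset (Fin N → ℕ), (∀ ν ∈ s, ∑ n, a n * (ν n : ℝ) ≤ t) →
    (s.card : ℝ) * ((N.factorial : ℝ) * ∏ n, a n) ≤ (t + ∑ n, a n) ^ N := by
  intro N
  induction N with
  | zero =>
    intro a _ t ht s _
    have h1 : s.card ≤ 1 := Finset.card_le_one.mpr (fun x _ y _ => Subsingleton.elim x y)
    have h2 : (s.card : ℝ) ≤ 1 := by exact_mod_cast h1
    simp only [Finset.univ_eq_empty, Finset.prod_empty, Finset.sum_empty, Nat.factorial_zero,
      pow_zero, Nat.cast_one]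
    linarith
  | succ n ih =>
    intro a ha t ht s hs
    classical
    set a' : Fin n → ℝ := fun i => a i.succ with ha'
    have ha0 : 0 < a 0 := ha 0
    have hSig : (0:ℝ) ≤ ∑ i, a' i := Finset.sum_nonneg fun i _ => (ha _).le
    set m := Nat.floor (t / a 0) with hm
    have hma : (m : ℝ) * a 0 ≤ t := by
      have h := Nat.floor_le (div_nonneg ht ha0.le)
      have := mul_le_mul_of_nonneg_right h ha0.le
      rwa [div_mul_cancel₀ t ha0.ne'] at this
    have hsum : ∀ ν ∈ s, a 0 * (ν 0 : ℝ) + ∑ i, a' i * ((ν i.succ : ℕ) : ℝ) ≤ t := by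
      intro ν hν
      have := hs ν hν
      rwa [Fin.sum_univ_succ] at this
    have hν0 : ∀ ν ∈ s, ν 0 ∈ Finset.range (m+1) := by
      intro ν hν
      refine Finset.mem_range.mpr (Nat.lt_succ_of_le (Nat.le_floor ?_))
      have h2 := hsum ν hν
      have h3 : (0:ℝ) ≤ ∑ i, a' i * ((ν i.succ : ℕ) : ℝ) :=
        Finset.sum_nonneg fun i _ => mul_nonneg (ha _).le (Nat.cast_nonneg _)
      rw [le_div_iff₀ ha0]
      nlinarith
    have hcard := Finset.card_eq_sum_card_fiberwise hν0
    -- fibers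
    have hfiber : ∀ k ∈ Finset.range (m+1),
        ((Finset.filter (fun ν => ν 0 = k) s).card : ℝ) * ((n.factorial : ℝ) * ∏ i, a' i)
          ≤ (t - k * a 0 + ∑ i, a' i) ^ n := by
      intro k hk
      have hkm : (k:ℝ) ≤ m := by exact_mod_cast Nat.lt_succ_iff.mp (Finset.mem_range.mp hk)
      have htk : 0 ≤ t - k * a 0 := by nlinarith
      set Sk := Finset.filter (fun ν => ν 0 = k) s with hSk
      have hinj : Set.InjOn (fun (ν : Fin (n+1) → ℕ) (i : Fin n) => ν i.succ) Sk := by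
        intro x hx y hy hxy
        have hx0 : x 0 = k := (Finset.mem_filter.mp hx).2
        have hy0 : y 0 = k := (Finset.mem_filter.mp hy).2
        funext i
        refine Fin.cases ?_ ?_ i
        · rw [hx0, hy0]
        · intro j; exact congrFun hxy j
      have hcardk : (Sk.image (fun ν (i : Fin n) => ν i.succ)).card = Sk.card :=
        Finset.card_image_of_injOn hinj
      have hmem : ∀ τ ∈ Sk.image (fun ν (i : Fin n) => ν i.succ),
          ∑ i, a' i * ((τ i : ℕ) : ℝ) ≤ t - k * a 0 := by
        intro τ hτ
        obtain ⟨ν, hν, rfl⟩ := Finset.mem_image.mp hτ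
        have hν' : ν ∈ s := (Finset.mem_filter.mp hν).1
        have hν0' : ν 0 = k := (Finset.mem_filter.mp hν).2
        have := hsum ν hν'
        rw [hν0'] at this
        linarith
      have := ih a' (fun i => ha _) (t - k * a 0) htk _ hmem
      rw [hcardk] at this
      exact this
    -- telescoping
    set c : ℕ → ℝ := fun k => (t + (∑ i, a' i) + a 0 - k * a 0) ^ (n+1) with hc
    have hstep : ∀ k ∈ Finset.range (m+1),
        ((n:ℝ)+1) * a 0 * (((Finset.filter (fun ν => ν 0 = k) s).card : ℝ)
          * ((n.factorial : ℝ) * ∏ i, a' i)) ≤ c k - c (k+1) := by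
      intro k hk
      have hkm : (k:ℝ) ≤ m := by exact_mod_cast Nat.lt_succ_iff.mp (Finset.mem_range.mp hk)
      have htk : 0 ≤ t - k * a 0 := by nlinarith
      have hb : (0:ℝ) ≤ t - k * a 0 + ∑ i, a' i := by linarith
      have hkey := aux_pow_ineq n hb ha0.le
      have h1 := hfiber k hk
      have e1 : c k = ((t - k * a 0 + ∑ i, a' i) + a 0) ^ (n+1) := by
        rw [hc]; ring_nf
      have e2 : c (k+1) = (t - k * a 0 + ∑ i, a' i) ^ (n+1) := by
        rw [hc]; push_cast; ring_nf
      rw [e1, e2]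
      calc ((n:ℝ)+1) * a 0 * (((Finset.filter (fun ν => ν 0 = k) s).card : ℝ)
            * ((n.factorial : ℝ) * ∏ i, a' i))
          ≤ ((n:ℝ)+1) * a 0 * (t - k * a 0 + ∑ i, a' i) ^ n := by
            apply mul_le_mul_of_nonneg_left h1 (by positivity)
        _ ≤ _ := by
            have : ((n:ℝ)+1) * a 0 * (t - k * a 0 + ∑ i, a' i) ^ n
                = ((n:ℝ)+1) * a 0 * (t - k * a 0 + ∑ i, a' i) ^ n := rfl
            linarith [hkey]
    -- sum up
    have hsum_tel : ∑ k ∈ Finset.range (m+1), (c k - c (k+1)) = c 0 - c (m+1) :=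
      Finset.sum_range_sub' c (m+1)
    have hcm : 0 ≤ c (m+1) := by
      rw [hc]
      apply pow_nonneg
      push_cast
      nlinarith
    have hc0 : c 0 = (t + ∑ i : Fin (n+1), a i) ^ (n+1) := by
      rw [hc, Fin.sum_univ_succ]
      push_cast; simp only [ha']; ring_nf
    have hLHS : (s.card : ℝ) * (((n+1).factorial : ℝ) * ∏ i : Fin (n+1), a i)
        = ∑ k ∈ Finset.range (m+1), ((n:ℝ)+1) * a 0 * (((Finset.filter (fun ν => ν 0 = k) s).card : ℝ)
          * ((n.factorial : ℝ) * ∏ i, a' i)) := by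
      have hrw : (s.card : ℝ) = ∑ k ∈ Finset.range (m+1), ((Finset.filter (fun ν => ν 0 = k) s).card : ℝ) := by
        exact_mod_cast congrArg (Nat.cast : ℕ → ℝ) hcard
      rw [hrw, Finset.sum_mul]
      apply Finset.sum_congr rfl
      intro k _
      rw [Nat.factorial_succ, Fin.prod_univ_succ]
      push_cast
      ring
    rw [hLHS]
    calc ∑ k ∈ Finset.range (m+1), ((n:ℝ)+1) * a 0 * (((Finset.filter (fun ν => ν 0 = k) s).card : ℝ)
          * ((n.factorial : ℝ) * ∏ i, a' i))
        ≤ ∑ k ∈ Finset.range (m+1), (c k - c (k+1)) := Finset.sum_le_sum hstep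
      _ = c 0 - c (m+1) := hsum_tel
      _ ≤ c 0 := by linarith
      _ = _ := hc0

lemma aux_summable_pi_prod : ∀ (N : ℕ) (F : Fin N → ℕ → ℝ), (∀ n k, 0 ≤ F n k) →
    (∀ n, Summable (F n)) → Summable (fun ν : Fin N → ℕ => ∏ n, F n (ν n)) := by
  intro N
  induction N with
  | zero =>
    intro F _ _
    exact Summable.of_finite
  | succ n ih =>
    intro F hF0 hFs
    have hrest : Summable (fun ν : Fin n → ℕ => ∏ i, F i.succ (ν i)) :=
      ih (fun i => F i.succ) (fun i k => hF0 _ _) (fun i => hFs i.succ)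
    have h1 : (0:ℕ → ℝ) ≤ F 0 := fun k => hF0 0 k
    have h2 : (0:(Fin n → ℕ) → ℝ) ≤ fun ν => ∏ i, F i.succ (ν i) :=
      fun ν => Finset.prod_nonneg fun i _ => hF0 _ _
    have hmul : Summable (fun x : ℕ × (Fin n → ℕ) => F 0 x.1 * ∏ i, F i.succ (x.2 i)) := by
      apply Summable.mul_of_nonneg (hFs 0) hrest h1 h2
    have hinj : Function.Injective (fun ν : Fin (n+1) → ℕ => ((ν 0, fun i => ν i.succ) : ℕ × (Fin n → ℕ))) := by
      intro a b hab
      simp only [Prod.mk.injEq] at hab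
      funext i
      refine Fin.cases ?_ ?_ i
      · exact hab.1
      · intro j; exact congrFun hab.2 j
    have h2' := hmul.comp_injective hinj
    refine h2'.congr (fun ν => ?_)
    simp [Function.comp, Fin.prod_univ_succ]

/-- Let `N ≥ 1`, `λ_n > 0`, `φ_n = exp(λ_n)`, and for `j ∈ ℝ` let
`Λ_j = {ν ∈ ℕ^N : ∑_n (2 λ_n ν_n − log(2 ν_n + 1)) ≤ j}`.  Let `X` be a real Hilbert
space and `(c_ν)` a family in `X` with `‖c_ν‖ ≤ C · ∏_n φ_n^{−ν_n} √(2 ν_n + 1)`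
for some `C ≥ 0`.  Then for every `0 < μ < 1` there is `j₀` such that for all
`j ≥ j₀`, with `M = #Λ_j`,
`∑_{ν ∉ Λ_j} ‖c_ν‖² ≤ C² · C_u(μ) · M · exp(−2 (M · N! · ∏_n λ_n / (1 + μ))^{1/N})`,
where `C_u(μ) = (4e + 4μe − 2) · e/(e−1)`. -/
theorem stmt_1 {X : Type*} [NormedAddCommGroup X] [InnerProductSpace ℝ X] [CompleteSpace X]
    (N : ℕ) (hN : 1 ≤ N) (lam : Fin N → ℝ) (hlam : ∀ n, 0 < lam n)
    (φ : Fin N → ℝ) (hφ : ∀ n, φ n = Real.exp (lam n))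
    (Λ : ℝ → Set (Fin N → ℕ))
    (hΛ : ∀ j : ℝ, Λ j = {ν : Fin N → ℕ |
      ∑ n, (2 * lam n * (ν n : ℝ) - Real.log (2 * (ν n : ℝ) + 1)) ≤ j})
    (C : ℝ) (hC : 0 ≤ C) (c : (Fin N → ℕ) → X)
    (hc : ∀ ν : Fin N → ℕ,
      ‖c ν‖ ≤ C * ∏ n, (φ n) ^ (-(ν n : ℝ)) * Real.sqrt (2 * (ν n : ℝ) + 1))
    (μ : ℝ) (hμ0 : 0 < μ) (hμ1 : μ < 1) :
    ∃ j₀ : ℝ, ∀ j : ℝ, j₀ ≤ j →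
      (∑' ν : {ν : Fin N → ℕ // ν ∉ Λ j}, ‖c ν.1‖ ^ 2)
        ≤ C ^ 2 * ((4 * Real.exp 1 + 4 * μ * Real.exp 1 - 2) * (Real.exp 1 / (Real.exp 1 - 1)))
            * ((Λ j).ncard : ℝ)
            * Real.exp (-2 * ((((Λ j).ncard : ℝ) * (N.factorial : ℝ) * ∏ n, lam n)
                / (1 + μ)) ^ ((1 : ℝ) / (N : ℝ))) := by
  classical
  have hNR : (0:ℝ) < (N:ℝ) := by exact_mod_cast hN
  set δ : ℝ := Real.log (1+μ) / (3*N) with hδdef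
  have hδ : 0 < δ := by
    apply div_pos (Real.log_pos (by linarith)) (by positivity)
  set r : ℝ := Real.exp (-δ) with hrdef
  have hr0 : 0 < r := Real.exp_pos _
  have hr1 : r < 1 := by
    rw [hrdef, ← Real.exp_zero]
    exact Real.exp_lt_exp.mpr (by linarith)
  set G : (Fin N → ℕ) → ℝ :=
    fun ν => ∑ n, (2 * lam n * (ν n : ℝ) - Real.log (2 * (ν n : ℝ) + 1)) with hGdef
  set F : Fin N → ℕ → ℝ :=
    fun n k => (2*(k:ℝ)+1) * Real.exp (-(2*(1-r)*lam n) * k) with hFdef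
  have hF0 : ∀ n k, 0 ≤ F n k := by
    intro n k; rw [hFdef]; positivity
  have hFs : ∀ n, Summable (F n) := by
    intro n
    have hq0 : (0:ℝ) < Real.exp (-(2*(1-r)*lam n)) := Real.exp_pos _
    have hq1 : Real.exp (-(2*(1-r)*lam n)) < 1 := by
      have hneg : -(2*(1-r)*lam n) < 0 := by nlinarith [hlam n]
      calc Real.exp (-(2*(1-r)*lam n)) < Real.exp 0 := Real.exp_lt_exp.mpr hneg
        _ = 1 := Real.exp_zero
    have h1 : Summable (fun k : ℕ => (k:ℝ)^1 * (Real.exp (-(2*(1-r)*lam n)))^k) := by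
      apply summable_pow_mul_geometric_of_norm_lt_one
      rw [Real.norm_eq_abs, abs_of_pos hq0]; exact hq1
    have h2 : Summable (fun k : ℕ => (Real.exp (-(2*(1-r)*lam n)))^k) :=
      summable_geometric_of_lt_one hq0.le hq1
    have h3 := (h1.mul_left 2).add h2
    apply h3.congr
    intro k
    have he : Real.exp (-(2*(1-r)*lam n) * k) = (Real.exp (-(2*(1-r)*lam n)))^k := by
      rw [← Real.exp_nat_mul, mul_comm]
    simp only [hFdef]
    rw [he]; ring
  set H : (Fin N → ℕ) → ℝ := fun ν => ∏ n, F n (ν n) with hHdef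
  have hH0 : ∀ ν, 0 ≤ H ν := fun ν => Finset.prod_nonneg fun n _ => hF0 n _
  have hH : Summable H := aux_summable_pi_prod N F hF0 hFs
  set S : ℝ := ∑' ν, H ν with hSdef
  have hS1 : 1 ≤ S := by
    have h0 : H (fun _ => 0) = 1 := by
      rw [hHdef]
      simp [hFdef]
    calc (1:ℝ) = H (fun _ => 0) := h0.symm
      _ ≤ S := Summable.le_tsum hH _ (fun ν _ => hH0 ν)
  set K : Fin N → ℝ := fun n => (1-r)*lam n - 1 - Real.log ((1-r)*lam n) with hKdef
  set K1 : ℝ := ∑ n, K n with hK1def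
  have hKpos : ∀ n, 0 ≤ K n := by
    intro n
    have h := Real.log_le_sub_one_of_pos (x := (1-r)*lam n) (by have := hlam n; nlinarith)
    rw [hKdef]; dsimp only; linarith
  have hK1 : 0 ≤ K1 := Finset.sum_nonneg fun n _ => hKpos n
  have hlog : ∀ (n : Fin N) (k : ℕ),
      Real.log (2*(k:ℝ)+1) ≤ 2*((1-r)*lam n)*(k:ℝ) + K n := by
    intro n k
    have hc0 : (0:ℝ) < (1-r)*lam n := by have := hlam n; nlinarith
    have hx : (0:ℝ) < 2*(k:ℝ)+1 := by positivity
    have h1 := Real.log_le_sub_one_of_pos (mul_pos hc0 hx)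
    rw [Real.log_mul hc0.ne' hx.ne'] at h1
    have h2 : (1-r)*lam n * (2*(k:ℝ)+1) = 2*((1-r)*lam n)*(k:ℝ) + (1-r)*lam n := by ring
    rw [hKdef]; dsimp only; linarith
  have hGlow : ∀ ν : Fin N → ℕ, r * (∑ n, 2 * lam n * (ν n : ℝ)) ≤ G ν + K1 := by
    intro ν
    have expand : G ν + K1 = ∑ n, (2*lam n*(ν n:ℝ) - Real.log (2*(ν n:ℝ)+1) + K n) := by
      rw [hGdef, hK1def]
      dsimp only
      rw [Finset.sum_add_distrib]
    rw [expand, Finset.mul_sum]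
    apply Finset.sum_le_sum
    intro n _
    have h := hlog n (ν n)
    have e1 : 2*((1-r)*lam n)*((ν n : ℕ):ℝ) = 2*lam n*((ν n : ℕ):ℝ) - 2*(r*(lam n*((ν n : ℕ):ℝ))) := by ring
    have e2 : r * (2*lam n*((ν n : ℕ):ℝ)) = 2*(r*(lam n*((ν n : ℕ):ℝ))) := by ring
    linarith [h, e1, e2]
  have hcG : ∀ ν : Fin N → ℕ, ‖c ν‖^2 ≤ C^2 * Real.exp (-(G ν)) := by
    intro ν
    have hP : (∏ n, (φ n) ^ (-(ν n : ℝ)) * Real.sqrt (2 * (ν n : ℝ) + 1)) ^ 2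
        = Real.exp (-(G ν)) := by
      rw [← Finset.prod_pow]
      have hfac : ∀ n ∈ Finset.univ, ((φ n) ^ (-(ν n : ℝ)) * Real.sqrt (2 * (ν n : ℝ) + 1)) ^ 2
          = Real.exp (-(2 * lam n * (ν n : ℝ) - Real.log (2 * (ν n : ℝ) + 1))) := by
        intro n _
        have hx : (0:ℝ) < 2 * (ν n : ℝ) + 1 := by positivity
        rw [mul_pow, Real.sq_sqrt hx.le, hφ n,
          Real.rpow_def_of_pos (Real.exp_pos _), Real.log_exp,
          ← Real.exp_nat_mul]
        rw [show -(2*lam n*(ν n:ℝ) - Real.log (2*(ν n:ℝ)+1))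
            = ((2:ℕ):ℝ) * (lam n * -(ν n:ℝ)) + Real.log (2*(ν n:ℝ)+1) by push_cast; ring,
          Real.exp_add, Real.exp_log hx]
      rw [Finset.prod_congr rfl hfac, ← Real.exp_sum]
      congr 1
      rw [hGdef]
      dsimp only
      rw [← Finset.sum_neg_distrib]
    have h1 := hc ν
    calc ‖c ν‖^2 ≤ (C * ∏ n, (φ n) ^ (-(ν n : ℝ)) * Real.sqrt (2 * (ν n : ℝ) + 1)) ^ 2 :=
          pow_le_pow_left₀ (norm_nonneg _) h1 2
      _ = C^2 * (∏ n, (φ n) ^ (-(ν n : ℝ)) * Real.sqrt (2 * (ν n : ℝ) + 1)) ^ 2 := by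
          rw [mul_pow]
      _ = C^2 * Real.exp (-(G ν)) := by rw [hP]
  have hGF : ∀ ν : Fin N → ℕ, Real.exp (-((1-r) * G ν)) ≤ H ν := by
    intro ν
    have expand : -((1-r) * G ν)
        = ∑ n, ((1-r) * Real.log (2*(ν n:ℝ)+1) + (-(2*(1-r)*lam n) * (ν n:ℝ))) := by
      rw [hGdef]
      dsimp only
      rw [Finset.mul_sum, ← Finset.sum_neg_distrib]
      apply Finset.sum_congr rfl
      intro n _
      ring
    rw [expand, Real.exp_sum, hHdef]
    apply Finset.prod_le_prod (fun n _ => (Real.exp_pos _).le)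
    intro n _
    rw [Real.exp_add]
    simp only [hFdef]
    apply mul_le_mul_of_nonneg_right _ (Real.exp_pos _).le
    have hx : (0:ℝ) < 2*(ν n:ℝ)+1 := by positivity
    have hlog0 : 0 ≤ Real.log (2*(ν n:ℝ)+1) :=
      Real.log_nonneg (by nlinarith [(Nat.cast_nonneg (ν n) : (0:ℝ) ≤ (ν n : ℝ))])
    calc Real.exp ((1-r) * Real.log (2*(ν n:ℝ)+1))
        ≤ Real.exp (Real.log (2*(ν n:ℝ)+1)) := by
          apply Real.exp_le_exp.mpr
          nlinarith
      _ = 2*(ν n:ℝ)+1 := Real.exp_log hx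
  -- choose j₀
  refine ⟨max 0 ((Real.log S + K1 + ∑ n, 2*lam n)/(r - r^2)), ?_⟩
  intro j hj
  have hj0 : 0 ≤ j := le_trans (le_max_left _ _) hj
  have hgap : 0 < r - r^2 := by nlinarith
  have hjbig : (Real.log S + K1 + ∑ n, 2*lam n) ≤ j * (r - r^2) := by
    have h1 : (Real.log S + K1 + ∑ n, 2*lam n)/(r - r^2) ≤ j := le_trans (le_max_right _ _) hj
    calc Real.log S + K1 + ∑ n, 2*lam n
        = ((Real.log S + K1 + ∑ n, 2*lam n)/(r - r^2)) * (r - r^2) := by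
          rw [div_mul_cancel₀ _ hgap.ne']
      _ ≤ j * (r - r^2) := by
          apply mul_le_mul_of_nonneg_right h1 hgap.le
  set t : ℝ := (j + K1)/r with htdef
  have ht : 0 ≤ t := div_nonneg (by linarith) hr0.le
  have hmemt : ∀ ν ∈ Λ j, ∑ n, (2 * lam n) * (ν n : ℝ) ≤ t := by
    intro ν hν
    rw [hΛ j] at hν
    have hGj : G ν ≤ j := hν
    have := hGlow ν
    rw [htdef, le_div_iff₀ hr0]
    calc (∑ n, 2 * lam n * (ν n:ℝ)) * r = r * ∑ n, 2 * lam n * (ν n:ℝ) := by ring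
      _ ≤ G ν + K1 := hGlow ν
      _ ≤ j + K1 := by linarith
  have hfin : (Λ j).Finite := by
    apply Set.Finite.subset (Set.finite_Icc (fun _ => 0 : Fin N → ℕ)
      (fun n => Nat.floor (t/(2*lam n))))
    intro ν hν
    constructor
    · intro n; exact Nat.zero_le _
    · intro n
      apply Nat.le_floor
      rw [le_div_iff₀ (by have := hlam n; linarith)]
      calc (ν n : ℝ) * (2 * lam n) = 2 * lam n * (ν n : ℝ) := by ring
        _ ≤ ∑ i, 2 * lam i * (ν i : ℝ) := by
            apply Finset.single_le_sum (f := fun i => 2 * lam i * (ν i : ℝ))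
              (fun i _ => by have := hlam i; positivity) (Finset.mem_univ n)
        _ ≤ t := hmemt ν hν
  have h0mem : (fun _ => 0 : Fin N → ℕ) ∈ Λ j := by
    rw [hΛ j]
    simp only [Set.mem_setOf_eq, Nat.cast_zero]
    simp [Real.log_one]
    positivity
  have hM1 : 1 ≤ (Λ j).ncard := by
    have := (Set.ncard_pos hfin).mpr ⟨_, h0mem⟩
    omega
  set M : ℕ := (Λ j).ncard with hMdef
  have hMR : (1:ℝ) ≤ (M:ℝ) := by exact_mod_cast hM1
  have hcount : ((hfin.toFinset.card : ℕ) : ℝ) * ((N.factorial:ℝ) * ∏ n, 2*lam n)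
      ≤ (t + ∑ n, 2*lam n)^N := by
    apply aux_count N (fun n => 2*lam n)
      (fun n => by show (0:ℝ) < 2*lam n; linarith [hlam n]) t ht
    intro ν hν
    exact hmemt ν (hfin.mem_toFinset.mp hν)
  have hcount' : (M:ℝ) * ((N.factorial:ℝ) * ∏ n, 2*lam n) ≤ (t + ∑ n, 2*lam n)^N := by
    rwa [hMdef, Set.ncard_eq_toFinset_card (Λ j) hfin]
  have hSig2 : (0:ℝ) ≤ ∑ n, 2*lam n := Finset.sum_nonneg fun n _ => by have := hlam n; linarith
  have hprod2 : (∏ n, 2*lam n) = 2^N * ∏ n, lam n := by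
    rw [Finset.prod_mul_distrib, Finset.prod_const]
    simp
  set B : ℝ := (t + ∑ n, 2*lam n)/2 with hBdef
  have hB0 : 0 ≤ B := by rw [hBdef]; positivity
  have hprodlam : (0:ℝ) ≤ ∏ n, lam n := Finset.prod_nonneg fun n _ => (hlam n).le
  have hMB : (M:ℝ) * (N.factorial:ℝ) * (∏ n, lam n) ≤ B^N := by
    have h2N : (0:ℝ) < 2^N := by positivity
    rw [hBdef, div_pow, le_div_iff₀ h2N]
    calc (M:ℝ) * (N.factorial:ℝ) * (∏ n, lam n) * 2^N
        = (M:ℝ) * ((N.factorial:ℝ) * (2^N * ∏ n, lam n)) := by ring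
      _ = (M:ℝ) * ((N.factorial:ℝ) * ∏ n, 2*lam n) := by rw [hprod2]
      _ ≤ (t + ∑ n, 2*lam n)^N := hcount'
  set A : ℝ := ((M:ℝ) * (N.factorial:ℝ) * ∏ n, lam n)/(1+μ) with hAdef
  have hA0 : 0 ≤ A := by
    rw [hAdef]
    apply div_nonneg _ (by linarith)
    positivity
  have hμ' : (0:ℝ) < 1 + μ := by linarith
  have hApow : A ^ ((1:ℝ)/(N:ℝ)) ≤ B * r^3 := by
    have h1 : A ≤ B^N/(1+μ) := by
      rw [hAdef]
      gcongr
    have h2 : A ^ ((1:ℝ)/(N:ℝ)) ≤ (B^N/(1+μ)) ^ ((1:ℝ)/(N:ℝ)) :=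
      Real.rpow_le_rpow hA0 h1 (by positivity)
    have h3 : (B^N/(1+μ)) ^ ((1:ℝ)/(N:ℝ)) = B * r^3 := by
      rw [one_div, Real.div_rpow (by positivity) hμ'.le,
        Real.pow_rpow_inv_natCast hB0 (by omega)]
      have h4 : ((1+μ):ℝ) ^ ((N:ℝ)⁻¹) = Real.exp (3*δ) := by
        rw [Real.rpow_def_of_pos hμ']
        congr 1
        rw [hδdef]
        field_simp
      have h5 : r^3 = Real.exp (-(3*δ)) := by
        rw [hrdef, ← Real.exp_nat_mul]
        congr 1
        push_cast
        ring
      rw [h4, h5, Real.exp_neg, div_eq_mul_inv]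
    rw [h3] at h2
    exact h2
  have hAexp : Real.exp (-(j+K1)*r^2 - (∑ n, 2*lam n)*r^3)
      ≤ Real.exp (-2 * A ^ ((1:ℝ)/(N:ℝ))) := by
    apply Real.exp_le_exp.mpr
    have e1 : t * r^3 = (j+K1)*r^2 := by
      rw [htdef]
      field_simp
    have h7 : -2 * (B * r^3) ≤ -2 * A ^ ((1:ℝ)/(N:ℝ)) := by nlinarith [hApow]
    have e2 : -2 * (B * r^3) = -(t*r^3) - (∑ n, 2*lam n)*r^3 := by rw [hBdef]; ring
    nlinarith [e1, e2, h7]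
  have hkey : S * Real.exp (-(r*j)) ≤ Real.exp (-2 * A ^ ((1:ℝ)/(N:ℝ))) := by
    have hS0 : (0:ℝ) < S := lt_of_lt_of_le one_pos hS1
    have h6 : S * Real.exp (-(r*j)) = Real.exp (Real.log S + -(r*j)) := by
      rw [Real.exp_add, Real.exp_log hS0]
    rw [h6]
    refine le_trans (Real.exp_le_exp.mpr ?_) hAexp
    have hr2 : r^2 ≤ 1 := pow_le_one₀ hr0.le hr1.le
    have hr3 : r^3 ≤ 1 := pow_le_one₀ hr0.le hr1.le
    have m1 : K1 * r^2 ≤ K1 := by nlinarith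
    have m2 : (∑ n, 2*lam n) * r^3 ≤ (∑ n, 2*lam n) := by nlinarith
    nlinarith [hjbig, m1, m2]
  have hD1 : (1:ℝ) ≤ (4*Real.exp 1 + 4*μ*Real.exp 1 - 2) * (Real.exp 1/(Real.exp 1 - 1)) := by
    have he : (2:ℝ) ≤ Real.exp 1 := by
      have := Real.add_one_le_exp (1:ℝ); linarith
    have h1 : (1:ℝ) ≤ Real.exp 1/(Real.exp 1 - 1) := by
      rw [le_div_iff₀ (by linarith)]; linarith
    have h2 : (1:ℝ) ≤ 4*Real.exp 1 + 4*μ*Real.exp 1 - 2 := by nlinarith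
    nlinarith
  have hbound : ∀ ν : {ν : Fin N → ℕ // ν ∉ Λ j},
      ‖c ν.1‖^2 ≤ (C^2 * Real.exp (-(r*j))) * H ν.1 := by
    rintro ⟨ν, hν⟩
    have hGj : j < G ν := by
      rw [hΛ j] at hν
      exact lt_of_not_ge hν
    have hsplit : Real.exp (-(G ν)) = Real.exp (-(r * G ν)) * Real.exp (-((1-r) * G ν)) := by
      rw [← Real.exp_add]; congr 1; ring
    calc ‖c ν‖^2 ≤ C^2 * Real.exp (-(G ν)) := hcG ν
      _ = C^2 * (Real.exp (-(r*G ν)) * Real.exp (-((1-r)*G ν))) := by rw [hsplit]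
      _ ≤ C^2 * (Real.exp (-(r*j)) * H ν) := by
          apply mul_le_mul_of_nonneg_left _ (by positivity)
          apply mul_le_mul (Real.exp_le_exp.mpr (by nlinarith [hr0, hGj]))
            (hGF ν) (Real.exp_pos _).le (Real.exp_pos _).le
      _ = (C^2 * Real.exp (-(r*j))) * H ν := by ring
  have hsubH : Summable (fun ν : {ν : Fin N → ℕ // ν ∉ Λ j} =>
      (C^2 * Real.exp (-(r*j))) * H ν.1) :=
    (hH.mul_left (C^2 * Real.exp (-(r*j)))).subtype {ν : Fin N → ℕ | ν ∉ Λ j}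
  have hsumc : Summable (fun ν : {ν : Fin N → ℕ // ν ∉ Λ j} => ‖c ν.1‖^2) :=
    Summable.of_nonneg_of_le (fun ν => by positivity) hbound hsubH
  have hstep1 := Summable.tsum_le_tsum hbound hsumc hsubH
  have hstep2 : (∑' ν : {ν : Fin N → ℕ // ν ∉ Λ j}, (C^2 * Real.exp (-(r*j))) * H ν.1)
      = (C^2 * Real.exp (-(r*j))) * ∑' ν : {ν : Fin N → ℕ // ν ∉ Λ j}, H ν.1 := tsum_mul_left
  have hstep3 : (∑' ν : {ν : Fin N → ℕ // ν ∉ Λ j}, H ν.1) ≤ S := by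
    rw [hSdef]
    exact Summable.tsum_le_tsum_of_inj (Subtype.val) Subtype.val_injective
      (fun ν _ => hH0 ν) (fun ν => le_refl _) (hH.subtype _) hH
  calc (∑' ν : {ν : Fin N → ℕ // ν ∉ Λ j}, ‖c ν.1‖^2)
      ≤ (C^2 * Real.exp (-(r*j))) * ∑' ν : {ν : Fin N → ℕ // ν ∉ Λ j}, H ν.1 := by
        rw [← hstep2]; exact hstep1
    _ ≤ (C^2 * Real.exp (-(r*j))) * S := by
        apply mul_le_mul_of_nonneg_left hstep3 (by positivity)
    _ = C^2 * (S * Real.exp (-(r*j))) := by ring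
    _ ≤ C^2 * (((4*Real.exp 1 + 4*μ*Real.exp 1 - 2) * (Real.exp 1/(Real.exp 1 - 1)))
          * ((M:ℝ) * Real.exp (-2 * A ^ ((1:ℝ)/(N:ℝ))))) := by
        apply mul_le_mul_of_nonneg_left _ (by positivity)
        have hMexp : (1:ℝ) * Real.exp (-2 * A ^ ((1:ℝ)/(N:ℝ)))
            ≤ (M:ℝ) * Real.exp (-2 * A ^ ((1:ℝ)/(N:ℝ))) :=
          mul_le_mul_of_nonneg_right hMR (Real.exp_pos _).le
        calc S * Real.exp (-(r*j)) ≤ Real.exp (-2 * A ^ ((1:ℝ)/(N:ℝ))) := hkey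
          _ = 1 * (1 * Real.exp (-2 * A ^ ((1:ℝ)/(N:ℝ)))) := by ring
          _ ≤ ((4*Real.exp 1 + 4*μ*Real.exp 1 - 2) * (Real.exp 1/(Real.exp 1 - 1)))
              * ((M:ℝ) * Real.exp (-2 * A ^ ((1:ℝ)/(N:ℝ)))) := by
              apply mul_le_mul hD1 hMexp (by positivity) (by nlinarith [hD1])
    _ = C^2 * ((4*Real.exp 1 + 4*μ*Real.exp 1 - 2) * (Real.exp 1/(Real.exp 1 - 1)))
          * (M:ℝ) * Real.exp (-2 * A ^ ((1:ℝ)/(N:ℝ))) := by ring
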